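/- Let Γ = ZMod 4 × ZMod 4, let a, b : Γ →* ℂˣ be the characters a(x,y) = i^x and b(x,y) = i^y, let η := b², and let r : Γ →* GL (Fin 4) ℂ be the diagonal representation r(γ) = diag(a(γ), a(γ)·b(γ)², b(γ), b(γ)·a(γ)²). Then: (1) for every γ ∈ Γ, the matrix η(γ) • r(γ) is similar to r(γ) or to r(γ)⁻¹; (2) there is no invertible complex 4×4 matrix u with u·r(γ)·u⁻¹ = η(γ) • r(γ) for all γ ∈ Γ; and (3) there is no invertible complex 4×4 matrix u with u·r(γ)⁻¹·u⁻¹ = η(γ) • r(γ) for all γ ∈ Γ. -/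

import Mathlib

open Matrix

lemma I_pow_pow_four (n : ℕ) : (Complex.I ^ n) ^ 4 = 1 := by
  rw [← pow_mul, mul_comm, pow_mul]
  norm_num

lemma I_pow_sq (n : ℕ) : (Complex.I ^ n) ^ 2 = 1 ∨ (Complex.I ^ n) ^ 2 = -1 := by
  rw [← pow_mul, mul_comm, pow_mul, Complex.I_sq]
  rcases Nat.even_or_odd n with h | h
  · left; exact h.neg_one_pow
  · right; exact h.neg_one_pow

lemma diag_inv_aux (M : (Matrix (Fin 4) (Fin 4) ℂ)ˣ) (A B : ℂ) (hA4 : A^4 = 1) (hB4 : B^4 = 1)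
    (hM : (M : Matrix (Fin 4) (Fin 4) ℂ) = Matrix.diagonal ![A, A*B^2, B, B*A^2]) :
    ((M⁻¹ : (Matrix (Fin 4) (Fin 4) ℂ)ˣ) : Matrix (Fin 4) (Fin 4) ℂ)
      = Matrix.diagonal ![A^3, A^3*B^2, B^3, B^3*A^2] := by
  have h : (M : Matrix (Fin 4) (Fin 4) ℂ) *
      Matrix.diagonal ![A^3, A^3*B^2, B^3, B^3*A^2] = 1 := by
    rw [hM]
    ext i j
    fin_cases i <;> fin_cases j <;>
      simp [Matrix.mul_apply, Matrix.diagonal, Fin.sum_univ_four, Matrix.one_apply] <;>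
      first
        | linear_combination hA4
        | linear_combination hB4
        | linear_combination B^4 * hA4 + hB4
  rw [Matrix.coe_units_inv, Matrix.inv_eq_right_inv h]

/-- Example 1: with `Γ = ZMod 4 × ZMod 4`, `a(x,y) = i^x`, `b(x,y) = i^y`, `η = b²` and
`r = diag(a, a·b², b, b·a²)`, the representations `η·r` and `r` are element conjugate in a
`Spin(1,6)`-subgroup (each `η(γ)·r(γ)` is similar to `r(γ)` or `r(γ)⁻¹`), but `η·r` is
conjugate neither to `r` nor to its dual. -/
theorem example1_element_conj_not_conj
    (a b : Multiplicative (ZMod 4 × ZMod 4) →* ℂˣ)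
    (ha : ∀ γ : Multiplicative (ZMod 4 × ZMod 4),
      (a γ : ℂ) = Complex.I ^ ((Multiplicative.toAdd γ).1).val)
    (hb : ∀ γ : Multiplicative (ZMod 4 × ZMod 4),
      (b γ : ℂ) = Complex.I ^ ((Multiplicative.toAdd γ).2).val)
    (r : Multiplicative (ZMod 4 × ZMod 4) →* GL (Fin 4) ℂ)
    (hr : ∀ γ, (r γ : Matrix (Fin 4) (Fin 4) ℂ) =
      Matrix.diagonal
        ![(a γ : ℂ), (a γ : ℂ) * (b γ : ℂ) ^ 2, (b γ : ℂ), (b γ : ℂ) * (a γ : ℂ) ^ 2]) :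
    (∀ γ,
      (∃ u : (Matrix (Fin 4) (Fin 4) ℂ)ˣ,
        (u : Matrix (Fin 4) (Fin 4) ℂ) * ((b γ : ℂ) ^ 2 • (r γ : Matrix (Fin 4) (Fin 4) ℂ)) *
          ((u⁻¹ : (Matrix (Fin 4) (Fin 4) ℂ)ˣ) : Matrix (Fin 4) (Fin 4) ℂ) =
            (r γ : Matrix (Fin 4) (Fin 4) ℂ)) ∨
      (∃ u : (Matrix (Fin 4) (Fin 4) ℂ)ˣ,
        (u : Matrix (Fin 4) (Fin 4) ℂ) * ((b γ : ℂ) ^ 2 • (r γ : Matrix (Fin 4) (Fin 4) ℂ)) *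
          ((u⁻¹ : (Matrix (Fin 4) (Fin 4) ℂ)ˣ) : Matrix (Fin 4) (Fin 4) ℂ) =
            (((r γ)⁻¹ : GL (Fin 4) ℂ) : Matrix (Fin 4) (Fin 4) ℂ))) ∧
    (¬ ∃ u : (Matrix (Fin 4) (Fin 4) ℂ)ˣ, ∀ γ,
      (u : Matrix (Fin 4) (Fin 4) ℂ) * (r γ : Matrix (Fin 4) (Fin 4) ℂ) *
          ((u⁻¹ : (Matrix (Fin 4) (Fin 4) ℂ)ˣ) : Matrix (Fin 4) (Fin 4) ℂ) =
        (b γ : ℂ) ^ 2 • (r γ : Matrix (Fin 4) (Fin 4) ℂ)) ∧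
    (¬ ∃ u : (Matrix (Fin 4) (Fin 4) ℂ)ˣ, ∀ γ,
      (u : Matrix (Fin 4) (Fin 4) ℂ) * (((r γ)⁻¹ : GL (Fin 4) ℂ) : Matrix (Fin 4) (Fin 4) ℂ) *
          ((u⁻¹ : (Matrix (Fin 4) (Fin 4) ℂ)ˣ) : Matrix (Fin 4) (Fin 4) ℂ) =
        (b γ : ℂ) ^ 2 • (r γ : Matrix (Fin 4) (Fin 4) ℂ)) := by
  refine ⟨?_, ?_, ?_⟩
  · -- part 1: element conjugacy
    intro γ
    set A : ℂ := (a γ : ℂ) with hAdef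
    set B : ℂ := (b γ : ℂ) with hBdef
    have hA4 : A ^ 4 = 1 := by rw [hAdef, ha]; exact I_pow_pow_four _
    have hB4 : B ^ 4 = 1 := by rw [hBdef, hb]; exact I_pow_pow_four _
    have hA2 : A ^ 2 = 1 ∨ A ^ 2 = -1 := by rw [hAdef, ha]; exact I_pow_sq _
    have hB2 : B ^ 2 = 1 ∨ B ^ 2 = -1 := by rw [hBdef, hb]; exact I_pow_sq _
    have hrinv := diag_inv_aux (r γ) A B hA4 hB4 (hr γ)
    rcases hB2 with hB2 | hB2
    · left
      refine ⟨1, ?_⟩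
      rw [hB2, one_smul]
      simp
    · have hB3 : B ^ 3 = -B := by rw [pow_succ, hB2]; ring
      rcases hA2 with hA2 | hA2
      · -- A² = 1 : conjugate by the swap(0,1) matrix, get r⁻¹
        right
        have hA3 : A ^ 3 = A := by rw [pow_succ, hA2, one_mul]
        have hPP : (!![0,1,0,0; 1,0,0,0; 0,0,1,0; 0,0,0,1] : Matrix (Fin 4) (Fin 4) ℂ) *
            !![0,1,0,0; 1,0,0,0; 0,0,1,0; 0,0,0,1] = 1 := by
          ext i j
          fin_cases i <;> fin_cases j <;>
            simp [Matrix.mul_apply, Fin.sum_univ_four, Matrix.one_apply, Matrix.vecHead, Matrix.vecTail]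
        refine ⟨⟨_, _, hPP, hPP⟩, ?_⟩
        show (!![0,1,0,0; 1,0,0,0; 0,0,1,0; 0,0,0,1] : Matrix (Fin 4) (Fin 4) ℂ) * _ *
          !![0,1,0,0; 1,0,0,0; 0,0,1,0; 0,0,0,1] = _
        rw [hr, hrinv, ← hAdef, ← hBdef]
        ext i j
        simp only [Matrix.mul_apply, Fin.sum_univ_four, Matrix.smul_apply,
          Matrix.diagonal_apply, smul_eq_mul]
        fin_cases i <;> fin_cases j <;>
          simp [-mul_eq_zero, Matrix.vecHead, Matrix.vecTail] <;>
          linear_combination (norm := (simp only [hA2, hB2, hA3, hB3]; ring)) (0 : ℂ)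
      · -- A² = -1 : η·r = r⁻¹ on the nose
        right
        have hA3 : A ^ 3 = -A := by rw [pow_succ, hA2]; ring
        refine ⟨1, ?_⟩
        rw [hr, hrinv, ← hAdef, ← hBdef]
        simp only [Units.val_one, one_mul, inv_one, mul_one]
        ext i j
        simp only [Matrix.smul_apply, Matrix.diagonal_apply, smul_eq_mul]
        fin_cases i <;> fin_cases j <;>
          simp [-mul_eq_zero, Matrix.vecHead, Matrix.vecTail] <;>
          linear_combination (norm := (simp only [hA2, hB2, hA3, hB3]; ring)) (0 : ℂ)
  · -- part 2: η·r is not conjugate to r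
    rintro ⟨u, hu⟩
    have hu2 := hu (Multiplicative.ofAdd ((0 : ZMod 4), (1 : ZMod 4)))
    have hAv : (a (Multiplicative.ofAdd ((0 : ZMod 4), (1 : ZMod 4))) : ℂ) = 1 := by
      rw [ha, show (Multiplicative.toAdd
        (Multiplicative.ofAdd ((0 : ZMod 4), (1 : ZMod 4)))).1.val = 0 by decide, pow_zero]
    have hBv : (b (Multiplicative.ofAdd ((0 : ZMod 4), (1 : ZMod 4))) : ℂ) = Complex.I := by
      rw [hb, show (Multiplicative.toAdd
        (Multiplicative.ofAdd ((0 : ZMod 4), (1 : ZMod 4)))).2.val = 1 by decide, pow_one]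
    have htr := congrArg Matrix.trace hu2
    rw [Matrix.trace_units_conj, Matrix.trace_smul, hr, Matrix.trace_diagonal,
      Fin.sum_univ_four, hAv, hBv] at htr
    simp [Complex.I_sq] at htr
    exact Complex.I_ne_zero (by linear_combination htr / 4)
  · -- part 3: η·r is not conjugate to the dual of r
    rintro ⟨u, hu⟩
    have hu3 := hu (Multiplicative.ofAdd ((1 : ZMod 4), (0 : ZMod 4)))
    have hAv : (a (Multiplicative.ofAdd ((1 : ZMod 4), (0 : ZMod 4))) : ℂ) = Complex.I := by
      rw [ha, show (Multiplicative.toAdd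
        (Multiplicative.ofAdd ((1 : ZMod 4), (0 : ZMod 4)))).1.val = 1 by decide, pow_one]
    have hBv : (b (Multiplicative.ofAdd ((1 : ZMod 4), (0 : ZMod 4))) : ℂ) = 1 := by
      rw [hb, show (Multiplicative.toAdd
        (Multiplicative.ofAdd ((1 : ZMod 4), (0 : ZMod 4)))).2.val = 0 by decide, pow_zero]
    have hA4 : (a (Multiplicative.ofAdd ((1 : ZMod 4), (0 : ZMod 4))) : ℂ) ^ 4 = 1 := by
      rw [ha]; exact I_pow_pow_four _
    have hB4 : (b (Multiplicative.ofAdd ((1 : ZMod 4), (0 : ZMod 4))) : ℂ) ^ 4 = 1 := by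
      rw [hb]; exact I_pow_pow_four _
    have hrinv := diag_inv_aux (r _) _ _ hA4 hB4
      (hr (Multiplicative.ofAdd ((1 : ZMod 4), (0 : ZMod 4))))
    have hI3 : Complex.I ^ 3 = -Complex.I := by rw [pow_succ, Complex.I_sq]; ring
    have htr := congrArg Matrix.trace hu3
    rw [Matrix.trace_units_conj, Matrix.trace_smul, hrinv, hr, Matrix.trace_diagonal,
      Matrix.trace_diagonal, Fin.sum_univ_four, Fin.sum_univ_four, hAv, hBv] at htr
    simp [Complex.I_sq, hI3] at htr
    exact Complex.I_ne_zero (by linear_combination -htr / 4)
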